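/- Let p be a prime and let m, d be integers with 1 ≤ m < d < p, and let a be an integer with p ≡ a (mod d). Then rep_p(m/d) = (p·t + m)/d, where t is the smallest positive integer such that d divides t·a + m. -/

import Mathlib

/-- For a prime `p` and a rational `x` with denominator prime to `p`, `repp p x` is the
unique element of `{0, 1, ..., p-1}` congruent to `x` modulo `p`. -/
def repp (p : ℕ) (x : ℚ) : ℕ := ZMod.val ((x.num : ZMod p) * (x.den : ZMod p)⁻¹)

/-- If `p ≡ a (mod d)` and `t` is the smallest positive integer with `d ∣ t·a + m`,
then `rep_p(m/d) = (p·t + m)/d`. -/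
theorem rep_formula (p m d : ℕ) (hp : p.Prime) (hm : 1 ≤ m) (hmd : m < d) (hdp : d < p)
    (a : ℤ) (ha : (p : ℤ) ≡ a [ZMOD (d : ℤ)])
    (t : ℕ) (ht : 0 < t) (hdiv : (d : ℤ) ∣ (t : ℤ) * a + m)
    (hmin : ∀ s : ℕ, 0 < s → (d : ℤ) ∣ (s : ℤ) * a + m → t ≤ s) :
    (d : ℤ) * repp p ((m : ℚ) / d) = (p : ℤ) * t + m := by
  haveI : Fact p.Prime := ⟨hp⟩
  set x : ℚ := (m : ℚ) / d with hxdef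
  set r : ℕ := repp p x with hrdef
  have hd0 : 0 < d := lt_trans (by omega) hmd
  have hp0 : 0 < p := hp.pos
  -- t < d
  have htd : t < d := by
    by_contra h
    push_neg at h
    rcases lt_or_eq_of_le h with h' | h'
    · -- t > d : s = t - d contradicts minimality
      have hs : (d : ℤ) ∣ ((t - d : ℕ) : ℤ) * a + m := by
        have : (((t - d : ℕ) : ℤ)) = (t : ℤ) - d := by omega
        rw [this]
        have : (t : ℤ) * a + m - ((t : ℤ) - d) * a - m = d * a := by ring
        have h2 : (d : ℤ) ∣ (d : ℤ) * a := Dvd.intro a rfl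
        have := dvd_sub hdiv h2
        convert this using 1 <;> first | rfl | ring
      have := hmin (t - d) (by omega) hs
      omega
    · -- t = d : then d ∣ m
      subst h'
      have : (d : ℤ) ∣ (m : ℤ) := by
        have h2 : (d : ℤ) ∣ (d : ℤ) * a := Dvd.intro a rfl
        have := dvd_sub hdiv h2
        simpa using this
      have := Int.le_of_dvd (by exact_mod_cast hm) this
      omega
  -- d ∣ p*t + m
  have hdpt : (d : ℤ) ∣ (p : ℤ) * t + m := by
    have hpa : (d : ℤ) ∣ a - p := (Int.ModEq.dvd ha)
    have : (p : ℤ) * t + m = ((t : ℤ) * a + m) - t * (a - p) := by ring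
    rw [this]
    exact dvd_sub hdiv (Dvd.dvd.mul_left hpa t)
  -- key congruence: d * r ≡ m (mod p)
  have hden_dvd : ((x.den : ℤ)) ∣ (d : ℤ) := by
    have h := Rat.den_dvd (m : ℤ) (d : ℤ)
    rw [Rat.divInt_eq_div] at h
    have hx2 : ((m : ℤ) : ℚ) / ((d : ℤ) : ℚ) = x := by rw [hxdef]; push_cast; ring
    rw [hx2] at h
    exact h
  have hden_pos : 0 < x.den := x.pos
  have hden_le : x.den ≤ d := by
    have := Int.le_of_dvd (by exact_mod_cast hd0) hden_dvd
    exact_mod_cast this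
  have hdenp : (x.den : ZMod p) ≠ 0 := by
    rw [Ne, ZMod.natCast_eq_zero_iff]
    intro hdd
    have := Nat.le_of_dvd hden_pos hdd
    omega
  have hcross : (x.num : ℚ) * d = (m : ℚ) * x.den := by
    have h1 : (x.num : ℚ) / x.den = (m : ℚ) / d := by
      rw [Rat.num_div_den]
    have hd' : (d : ℚ) ≠ 0 := by positivity
    have hden' : (x.den : ℚ) ≠ 0 := by positivity
    field_simp at h1
    linarith [h1]
  have hcrossZ : x.num * (d : ℤ) = (m : ℤ) * x.den := by exact_mod_cast hcross
  have hrcast : ((r : ℕ) : ZMod p) = (x.num : ZMod p) * (x.den : ZMod p)⁻¹ := by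
    simp [hrdef, repp, ZMod.natCast_val, ZMod.cast_id]
  have hkey : ((d : ℕ) : ZMod p) * (r : ZMod p) = ((m : ℕ) : ZMod p) := by
    rw [hrcast]
    have : ((d : ℕ) : ZMod p) * ((x.num : ZMod p) * (x.den : ZMod p)⁻¹)
        = ((x.num : ZMod p) * (d : ZMod p)) * (x.den : ZMod p)⁻¹ := by
      ring
    rw [this]
    have h2 : (x.num : ZMod p) * ((d : ℕ) : ZMod p) = ((m : ℕ) : ZMod p) * (x.den : ZMod p) := by
      have := congrArg (fun z : ℤ => (z : ZMod p)) hcrossZ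
      push_cast at this ⊢
      exact this
    rw [h2, mul_assoc, mul_inv_cancel₀ hdenp, mul_one]
  -- p ∣ d*r - m
  have hpdvd : (p : ℤ) ∣ (d : ℤ) * r - m := by
    rw [← ZMod.intCast_zmod_eq_zero_iff_dvd]
    push_cast
    rw [sub_eq_zero]
    exact_mod_cast hkey
  obtain ⟨k, hk⟩ := hpdvd
  have hrlt : r < p := ZMod.val_lt _
  -- bounds on k
  have hk0 : 0 ≤ k := by nlinarith [hk, hm, hp0]
  have hkd : k < d := by nlinarith [hk, hrlt, hd0]
  -- d ∣ p*k + m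
  have hdpk : (d : ℤ) ∣ (p : ℤ) * k + m := by
    have : (p : ℤ) * k + m = d * r := by omega
    rw [this]
    exact Dvd.intro r rfl
  -- d ∣ p*(t - k), coprime ⇒ t = k
  have hdtk : (d : ℤ) ∣ (p : ℤ) * ((t : ℤ) - k) := by
    have : (p : ℤ) * ((t : ℤ) - k) = ((p : ℤ) * t + m) - ((p : ℤ) * k + m) := by ring
    rw [this]
    exact dvd_sub hdpt hdpk
  have hcopN : Nat.Coprime d p :=
    Nat.coprime_comm.mp (hp.coprime_iff_not_dvd.mpr
      (fun h => by have := Nat.le_of_dvd hd0 h; omega))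
  have hcop : IsCoprime (d : ℤ) (p : ℤ) := Nat.isCoprime_iff_coprime.mpr hcopN
  have hdvd : (d : ℤ) ∣ ((t : ℤ) - k) := hcop.dvd_of_dvd_mul_left hdtk
  have hz : (t : ℤ) - k = 0 := by
    refine Int.eq_zero_of_abs_lt_dvd hdvd ?_
    rw [abs_lt]
    constructor <;> omega
  have hkt : k = (t : ℤ) := by omega
  rw [hkt] at hk
  linarith [hk]
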